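/- arXiv:0803.4182 — 2 statements merged into one kernel-verified Lean document; each statement's English description precedes it below -/
import Mathlib

section
/- With P_j^i[k] as the weighted sum over partitions of length i, first part j, containing at least one part of each of the sizes j−1,...,j−k, the following recurrence holds for k = 0: P_j^i[0] = (a_j + b_1)·↑P_j^{i-1}[0] + ↑P_{j-1}^{i-1}[0] + (P_{j-1}^i[0] − (a_{j-1} + b_1)·↑P_{j-1}^{i-1}[0]), where ↑ denotes the shift b_u ← b_{u+1}. -/
open Finset

attribute [local instance] Classical.propDecidable

noncomputable section

/-- Critical positions of a partition (as a function `Fin n → ℕ`): 0-indexed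
positions `u ≥ 1` with `lam u = lam (u-1)`. -/
def crit {n : ℕ} (lam : Fin n → ℕ) : Finset (Fin n) :=
  univ.filter fun u => 1 ≤ u.1 ∧
    lam u = lam ⟨u.1 - 1, Nat.lt_of_le_of_lt (Nat.sub_le u.1 1) u.2⟩

/-- The weight of a partition: the product over critical positions `u` of
`a (λ_u) + b_{u-1}` (paper's 1-indexed convention; here `u` is 0-indexed, so the
factor is `a (lam u) + b u`). -/
def wt {R : Type*} [CommRing R] (a b : ℕ → R) {n : ℕ} (lam : Fin n → ℕ) : R :=
  ∏ u ∈ crit lam, (a (lam u) + b u.1)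

/-- The finset of partitions of length `i`, with first part `j`, positive parts, and
at least one part equal to `j - l` for each `l = 1, …, k`. -/
def PartSet (j i k : ℕ) : Finset (Fin i → ℕ) :=
  (Fintype.piFinset fun _ : Fin i => Finset.Icc 1 j).filter fun lam =>
    (∀ u v : Fin i, u ≤ v → lam v ≤ lam u) ∧
    (∃ h : 0 < i, lam ⟨0, h⟩ = j) ∧
    (∀ l, 1 ≤ l → l ≤ k → ∃ u, lam u = j - l)

/-- `P_j^i[k]`: the weighted sum over `PartSet j i k`. -/
def P {R : Type*} [CommRing R] (a b : ℕ → R) (j i k : ℕ) : R :=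
  ∑ lam ∈ PartSet j i k, wt a b lam

lemma mem_PartSet {j i k : ℕ} {lam : Fin i → ℕ} :
    lam ∈ PartSet j i k ↔
      (∀ u, 1 ≤ lam u ∧ lam u ≤ j) ∧
      (∀ u v : Fin i, u ≤ v → lam v ≤ lam u) ∧
      (∃ h : 0 < i, lam ⟨0, h⟩ = j) ∧
      (∀ l, 1 ≤ l → l ≤ k → ∃ u, lam u = j - l) := by
  simp [PartSet, Fintype.mem_piFinset, Finset.mem_Icc, Finset.mem_filter]
lemma wt_eq_prod {R : Type*} [CommRing R] (a b : ℕ → R) {n : ℕ} (lam : Fin n → ℕ) :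
    wt a b lam = ∏ u : Fin n,
      if 1 ≤ u.1 ∧ lam u = lam ⟨u.1 - 1, Nat.lt_of_le_of_lt (Nat.sub_le u.1 1) u.2⟩
      then a (lam u) + b u.1 else 1 := by
  rw [wt, crit, Finset.prod_filter]
lemma wt_tail {R : Type*} [CommRing R] (a b : ℕ → R) {m : ℕ} (lam : Fin (m + 2) → ℕ) :
    wt a b lam =
      (if lam 1 = lam 0 then a (lam 1) + b 1 else 1) *
        wt a (fun u => b (u + 1)) (Fin.tail lam) := by
  rw [wt_eq_prod, wt_eq_prod]
  rw [Fin.prod_univ_succ, Fin.prod_univ_succ, Fin.prod_univ_succ]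
  simp only [Fin.val_zero, Fin.val_succ, Fin.tail]
  norm_num


lemma fin_one_eq {m : ℕ} : (1 : Fin (m + 2)) = ⟨1, by omega⟩ := by
  rw [Fin.ext_iff, Fin.val_one]

lemma fin_succ_le_one {m : ℕ} (u : Fin (m + 1)) : (1 : Fin (m + 2)) ≤ u.succ := by
  rw [Fin.le_def, Fin.val_one, Fin.val_succ]; omega

lemma sum_head {R : Type*} [CommRing R] (a b : ℕ → R) (j t m : ℕ) (ht : t ≤ j) :
    ∑ lam ∈ (PartSet j (m + 2) 0).filter (fun lam => lam 1 = t), wt a b lam =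
      (if t = j then a j + b 1 else 1) * P a (fun u => b (u + 1)) t (m + 1) 0 := by
  rw [P, Finset.mul_sum]
  refine Finset.sum_bij' (fun lam _ => Fin.tail lam) (fun mu _ => Fin.cons j mu) ?_ ?_ ?_ ?_ ?_
  · -- tail well-defined
    intro lam hlam
    rw [Finset.mem_filter] at hlam
    obtain ⟨hmem, h1⟩ := hlam
    rw [mem_PartSet] at hmem ⊢
    obtain ⟨hbd, hmono, ⟨_, h0⟩, _⟩ := hmem
    refine ⟨?_, ?_, ⟨Nat.succ_pos m, ?_⟩, ?_⟩
    · intro u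
      refine ⟨(hbd u.succ).1, ?_⟩
      calc lam u.succ ≤ lam 1 := hmono 1 u.succ (fin_succ_le_one u)
        _ = t := h1
    · intro u v huv
      exact hmono u.succ v.succ (Fin.succ_le_succ_iff.mpr huv)
    · show lam (⟨0, Nat.succ_pos m⟩ : Fin (m+1)).succ = t
      rw [← h1]
      congr 1
    · intro l hl hl'; omega
  · -- cons well-defined
    intro mu hmu
    rw [mem_PartSet] at hmu
    obtain ⟨hbd, hmono, ⟨_, h0⟩, _⟩ := hmu
    have h0' : mu ⟨0, Nat.succ_pos m⟩ = t := h0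
    have ht1 : 1 ≤ t := by have := (hbd ⟨0, Nat.succ_pos m⟩).1; omega
    beta_reduce
    rw [Finset.mem_filter, mem_PartSet]
    have hc0 : (Fin.cons j mu : Fin (m+2) → ℕ) 0 = j := by simp
    refine ⟨⟨?_, ?_, ⟨Nat.succ_pos (m+1), ?_⟩, ?_⟩, ?_⟩
    · intro u
      rcases Fin.eq_zero_or_eq_succ u with rfl | ⟨v, rfl⟩
      · rw [hc0]; omega
      · rw [Fin.cons_succ]
        exact ⟨(hbd v).1, le_trans (hbd v).2 ht⟩
    · intro u v huv
      rcases Fin.eq_zero_or_eq_succ u with rfl | ⟨u', rfl⟩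
      · rcases Fin.eq_zero_or_eq_succ v with rfl | ⟨v', rfl⟩
        · exact le_refl _
        · rw [Fin.cons_succ, hc0]
          exact le_trans (hbd v').2 ht
      · rcases Fin.eq_zero_or_eq_succ v with rfl | ⟨v', rfl⟩
        · exact absurd (le_antisymm huv (Fin.zero_le _)) (Fin.succ_ne_zero u')
        · rw [Fin.cons_succ, Fin.cons_succ]
          exact hmono u' v' (Fin.succ_le_succ_iff.mp huv)
    · exact hc0
    · intro l hl hl'; omega
    · show (Fin.cons j mu : Fin (m+2) → ℕ) 1 = t
      have e : (1 : Fin (m+2)) = (⟨0, Nat.succ_pos m⟩ : Fin (m+1)).succ := by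
        apply Fin.ext
        simp [Fin.val_succ, Fin.val_one]
      rw [e, Fin.cons_succ, h0']
  · -- left inverse
    intro lam hlam
    rw [Finset.mem_filter, mem_PartSet] at hlam
    obtain ⟨⟨_, _, ⟨_, h0⟩, _⟩, _⟩ := hlam
    have h0' : lam 0 = j := h0
    show Fin.cons j (Fin.tail lam) = lam
    rw [← h0', Fin.cons_self_tail]
  · intro mu _
    simp
  · -- weights
    intro lam hlam
    rw [Finset.mem_filter, mem_PartSet] at hlam
    obtain ⟨⟨_, _, ⟨_, h0⟩, _⟩, h1⟩ := hlam
    have h0' : lam 0 = j := h0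
    beta_reduce
    rw [wt_tail a b lam, h1, h0']
    by_cases h : t = j
    · subst h; simp
    · rw [if_neg h, if_neg h]

lemma fin_ne_zero_of_val {m : ℕ} {u : Fin (m + 2)} (h : u.1 ≠ 0) : u ≠ 0 := by
  intro he; apply h; rw [he]; simp

lemma fin_one_le_of_ne {m : ℕ} {u : Fin (m + 2)} (hu : u ≠ 0) : (1 : Fin (m + 2)) ≤ u := by
  have : u.1 ≠ 0 := by
    intro h; exact hu (Fin.ext (by simp [h]))
  rw [Fin.le_def, Fin.val_one]; omega

lemma wt_update {R : Type*} [CommRing R] (a b : ℕ → R) {m : ℕ} (lam : Fin (m + 2) → ℕ)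
    (c : ℕ) (hne : lam 1 ≠ lam 0) (hnec : lam 1 ≠ c) :
    wt a b (Function.update lam 0 c) = wt a b lam := by
  rw [wt_eq_prod, wt_eq_prod]
  apply Finset.prod_congr rfl
  intro u _
  by_cases h0 : u.1 = 0
  · rw [if_neg (fun hc => absurd hc.1 (by omega)), if_neg (fun hc => absurd hc.1 (by omega))]
  · have hu0 : u ≠ 0 := fin_ne_zero_of_val h0
    by_cases h1 : u.1 = 1
    · have hu1 : u = 1 := by apply Fin.ext; rw [Fin.val_one]; exact h1
      have hv : (⟨u.1 - 1, Nat.lt_of_le_of_lt (Nat.sub_le u.1 1) u.2⟩ : Fin (m + 2)) = 0 := by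
        apply Fin.ext; simp [h1]
      have hL : ¬(1 ≤ u.1 ∧ Function.update lam 0 c u = Function.update lam 0 c 0) := by
        rw [Function.update_of_ne hu0, Function.update_self, hu1]
        exact fun hc => hnec hc.2
      have hR : ¬(1 ≤ u.1 ∧ lam u = lam 0) := by
        rw [hu1]; exact fun hc => hne hc.2
      rw [hv, if_neg hL, if_neg hR]
    · have hv : (⟨u.1 - 1, Nat.lt_of_le_of_lt (Nat.sub_le u.1 1) u.2⟩ : Fin (m + 2)) ≠ 0 := by
        apply fin_ne_zero_of_val; simp; omega
      simp only [Function.update_of_ne hu0, Function.update_of_ne hv]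

lemma sum_small {R : Type*} [CommRing R] (a b : ℕ → R) (j m : ℕ) :
    ∑ lam ∈ (PartSet j (m + 2) 0).filter (fun lam => lam 1 + 1 < j), wt a b lam =
      ∑ lam ∈ (PartSet (j - 1) (m + 2) 0).filter (fun lam => lam 1 + 1 < j), wt a b lam := by
  have h10 : (1 : Fin (m + 2)) ≠ 0 := fin_ne_zero_of_val (by rw [Fin.val_one]; omega)
  refine Finset.sum_bij' (fun lam _ => Function.update lam 0 (j - 1))
    (fun lam _ => Function.update lam 0 j) ?_ ?_ ?_ ?_ ?_
  · intro lam hlam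
    rw [Finset.mem_filter, mem_PartSet] at hlam
    obtain ⟨⟨hbd, hmono, ⟨_, h0⟩, _⟩, hsm⟩ := hlam
    have h0' : lam 0 = j := h0
    have hl1 : 1 ≤ lam 1 := (hbd 1).1
    have hle : ∀ u : Fin (m + 2), u ≠ 0 → lam u ≤ lam 1 :=
      fun u hu => hmono 1 u (fin_one_le_of_ne hu)
    beta_reduce
    rw [Finset.mem_filter, mem_PartSet]
    refine ⟨⟨?_, ?_, ⟨by omega, ?_⟩, fun l hl hl' => by omega⟩, ?_⟩
    · intro u
      by_cases hu : u = 0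
      · subst hu; rw [Function.update_self]; omega
      · rw [Function.update_of_ne hu]
        have := hle u hu
        exact ⟨(hbd u).1, by omega⟩
    · intro u v huv
      by_cases hu : u = 0
      · subst hu
        rw [Function.update_self]
        by_cases hv : v = 0
        · subst hv; rw [Function.update_self]
        · rw [Function.update_of_ne hv]
          have := hle v hv; omega
      · have hv : v ≠ 0 := fun h => hu (le_antisymm (h ▸ huv) (Fin.zero_le u))
        rw [Function.update_of_ne hu, Function.update_of_ne hv]
        exact hmono u v huv
    · have e : (⟨0, by omega⟩ : Fin (m + 2)) = 0 := by apply Fin.ext; simp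
      rw [e, Function.update_self]
    · rw [Function.update_of_ne h10]; exact hsm
  · intro mu hmu
    rw [Finset.mem_filter, mem_PartSet] at hmu
    obtain ⟨⟨hbd, hmono, ⟨_, h0⟩, _⟩, hsm⟩ := hmu
    have h0' : mu 0 = j - 1 := h0
    have hl1 : 1 ≤ mu 1 := (hbd 1).1
    have hle : ∀ u : Fin (m + 2), u ≠ 0 → mu u ≤ mu 1 :=
      fun u hu => hmono 1 u (fin_one_le_of_ne hu)
    beta_reduce
    rw [Finset.mem_filter, mem_PartSet]
    refine ⟨⟨?_, ?_, ⟨by omega, ?_⟩, fun l hl hl' => by omega⟩, ?_⟩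
    · intro u
      by_cases hu : u = 0
      · subst hu; rw [Function.update_self]; omega
      · rw [Function.update_of_ne hu]
        have h2 := (hbd u).2
        exact ⟨(hbd u).1, by omega⟩
    · intro u v huv
      by_cases hu : u = 0
      · subst hu
        rw [Function.update_self]
        by_cases hv : v = 0
        · subst hv; rw [Function.update_self]
        · rw [Function.update_of_ne hv]
          have := (hbd v).2; omega
      · have hv : v ≠ 0 := fun h => hu (le_antisymm (h ▸ huv) (Fin.zero_le u))
        rw [Function.update_of_ne hu, Function.update_of_ne hv]
        exact hmono u v huv
    · have e : (⟨0, by omega⟩ : Fin (m + 2)) = 0 := by apply Fin.ext; simp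
      rw [e, Function.update_self]
    · rw [Function.update_of_ne h10]; exact hsm
  · intro lam hlam
    rw [Finset.mem_filter, mem_PartSet] at hlam
    obtain ⟨⟨hbd, hmono, ⟨_, h0⟩, _⟩, hsm⟩ := hlam
    have h0' : lam 0 = j := h0
    beta_reduce
    rw [Function.update_idem, ← h0']
    exact Function.update_eq_self 0 lam
  · intro mu hmu
    rw [Finset.mem_filter, mem_PartSet] at hmu
    obtain ⟨⟨hbd, hmono, ⟨_, h0⟩, _⟩, hsm⟩ := hmu
    have h0' : mu 0 = j - 1 := h0
    beta_reduce
    rw [Function.update_idem, ← h0']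
    exact Function.update_eq_self 0 mu
  · intro lam hlam
    rw [Finset.mem_filter, mem_PartSet] at hlam
    obtain ⟨⟨hbd, hmono, ⟨_, h0⟩, _⟩, hsm⟩ := hlam
    have h0' : lam 0 = j := h0
    have hl1 : 1 ≤ lam 1 := (hbd 1).1
    beta_reduce
    exact (wt_update a b lam (j - 1) (by omega) (by omega)).symm

lemma P_split {R : Type*} [CommRing R] (a b : ℕ → R) (j m : ℕ) (hj : 1 ≤ j) :
    P a b j (m + 2) 0 =
      (∑ lam ∈ (PartSet j (m + 2) 0).filter (fun lam => lam 1 = j), wt a b lam) +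
      (∑ lam ∈ (PartSet j (m + 2) 0).filter (fun lam => lam 1 = j - 1), wt a b lam) +
      (∑ lam ∈ (PartSet j (m + 2) 0).filter (fun lam => lam 1 + 1 < j), wt a b lam) := by
  have key : ∀ lam ∈ PartSet j (m + 2) 0, lam 1 ≤ j := by
    intro lam h; rw [mem_PartSet] at h; exact (h.1 1).2
  rw [P, ← Finset.sum_filter_add_sum_filter_not (PartSet j (m + 2) 0)
      (fun lam => lam 1 = j) (wt a b),
    ← Finset.sum_filter_add_sum_filter_not ((PartSet j (m + 2) 0).filter
      (fun lam => ¬lam 1 = j)) (fun lam => lam 1 = j - 1) (wt a b),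
    Finset.filter_filter, Finset.filter_filter]
  have e1 : (PartSet j (m + 2) 0).filter (fun lam => ¬lam 1 = j ∧ lam 1 = j - 1) =
      (PartSet j (m + 2) 0).filter (fun lam => lam 1 = j - 1) :=
    Finset.filter_congr (fun lam hl => by have := key lam hl; constructor <;> (intro h; omega))
  have e2 : (PartSet j (m + 2) 0).filter (fun lam => ¬lam 1 = j ∧ ¬lam 1 = j - 1) =
      (PartSet j (m + 2) 0).filter (fun lam => lam 1 + 1 < j) :=
    Finset.filter_congr (fun lam hl => by have := key lam hl; constructor <;> (intro h; omega))
  rw [e1, e2]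
  ring

lemma P_split2 {R : Type*} [CommRing R] (a b : ℕ → R) (j m : ℕ) (hj : 1 ≤ j) :
    P a b (j - 1) (m + 2) 0 =
      (∑ lam ∈ (PartSet (j - 1) (m + 2) 0).filter (fun lam => lam 1 = j - 1), wt a b lam) +
      (∑ lam ∈ (PartSet (j - 1) (m + 2) 0).filter (fun lam => lam 1 + 1 < j), wt a b lam) := by
  have key : ∀ lam ∈ PartSet (j - 1) (m + 2) 0, lam 1 ≤ j - 1 := by
    intro lam h; rw [mem_PartSet] at h; exact (h.1 1).2
  rw [P, ← Finset.sum_filter_add_sum_filter_not (PartSet (j - 1) (m + 2) 0)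
      (fun lam => lam 1 = j - 1) (wt a b)]
  congr 1
  have e1 : (PartSet (j - 1) (m + 2) 0).filter (fun lam => ¬lam 1 = j - 1) =
      (PartSet (j - 1) (m + 2) 0).filter (fun lam => lam 1 + 1 < j) :=
    Finset.filter_congr (fun lam hl => by have := key lam hl; constructor <;> (intro h; omega))
  rw [e1]

/-- The recurrence for `P_j^i[0]`:
`P_j^i[0] = (a_j + b_1) ↑P_j^{i-1}[0] + ↑P_{j-1}^{i-1}[0]
  + (P_{j-1}^i[0] − (a_{j-1} + b_1) ↑P_{j-1}^{i-1}[0])`,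
where `↑` is the substitution `b_u ← b_{u+1}`. -/
theorem statement4 {R : Type*} [CommRing R] (a b : ℕ → R) (j i : ℕ)
    (hj : 1 ≤ j) (hi : 2 ≤ i) :
    P a b j i 0 =
      (a j + b 1) * P a (fun u => b (u + 1)) j (i - 1) 0 +
        P a (fun u => b (u + 1)) (j - 1) (i - 1) 0 +
        (P a b (j - 1) i 0 - (a (j - 1) + b 1) * P a (fun u => b (u + 1)) (j - 1) (i - 1) 0) := by
  obtain ⟨m, rfl⟩ : ∃ m, i = m + 2 := ⟨i - 2, by omega⟩
  have hred : m + 2 - 1 = m + 1 := rfl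
  rw [hred]
  have hA := sum_head a b j j m le_rfl
  rw [if_pos rfl] at hA
  have hB := sum_head a b j (j - 1) m (by omega)
  rw [if_neg (by omega), one_mul] at hB
  have hC := sum_head a b (j - 1) (j - 1) m le_rfl
  rw [if_pos rfl] at hC
  rw [P_split a b j m hj, hA, hB, sum_small a b j m, P_split2 a b j m hj, hC]
  ring

end
end

section
/- The map ι on non-intersecting triangular tableaux compatible with γ' but not with γ — defined by locating the minimal j_min > i_k such that some row r has its j_min-th part equal to k, setting ℓ = j_min − 1, and exchanging the initial segments of length ℓ of rows ℓ and r — is a well-defined involution without fixed points on this set, and it reverses the sign of the attached permutation. -/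
open Finset

attribute [local instance] Classical.propDecidable

noncomputable section

/-- A triangular tableau: row `i` (0-indexed) has `i+1` parts. -/
abbrev Tab (m : ℕ) := ∀ i : Fin m, Fin (i.1 + 1) → ℕ

/-- The finset of weakly decreasing rows of length `i+1` with parts in `{1,…,m}`. -/
def rowFinset (m : ℕ) (i : Fin m) : Finset (Fin (i.1 + 1) → ℕ) :=
  (Fintype.piFinset fun _ => Finset.Icc 1 m).filter fun lam =>
    ∀ u v : Fin (i.1 + 1), u ≤ v → lam v ≤ lam u

/-- The finset of triangular tableaux with rows of lengths `1,…,m` and parts in `{1,…,m}`. -/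
def tabFinset (m : ℕ) : Finset (Tab m) :=
  Fintype.piFinset fun i => rowFinset m i

/-- Non-intersecting: for every column `j` (0-indexed), the entries in column `j`
of the rows `j,…,m-1` are pairwise distinct. -/
def NonInt {m : ℕ} (T : Tab m) : Prop :=
  ∀ (i i' : Fin m) (j : ℕ) (h : j ≤ i.1) (h' : j ≤ i'.1),
    T i ⟨j, Nat.lt_succ_of_le h⟩ = T i' ⟨j, Nat.lt_succ_of_le h'⟩ → i = i'

/-- The sequence of first parts of a triangular tableau. -/
def firsts {m : ℕ} (T : Tab m) : Fin m → ℕ := fun i => T i ⟨0, Nat.succ_pos _⟩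

/-- The sign of a sequence, as `(-1)` to the number of inversions.  When the
sequence is a bijection onto `{1,…,m}` this is the sign of the corresponding
permutation. -/
def sgn {m : ℕ} (f : Fin m → ℕ) : ℤ :=
  (-1) ^ ((univ : Finset (Fin m × Fin m)).filter fun p => p.1 < p.2 ∧ f p.2 < f p.1).card



/-! ### Auxiliary sign lemmas -/

lemma signAux_eq_sign {n : ℕ} (f : Equiv.Perm (Fin n)) :
    Equiv.Perm.signAux f = Equiv.Perm.sign f := by
  refine Equiv.Perm.swap_induction_on f (by simp [Equiv.Perm.signAux_one]) ?_
  intro g x y hxy ih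
  rw [Equiv.Perm.signAux_mul, Equiv.Perm.sign_mul, Equiv.Perm.signAux_swap hxy,
    Equiv.Perm.sign_swap hxy, ih]

lemma prod_ite_neg_one {α : Type*} (s : Finset α) (p : α → Prop) [DecidablePred p] :
    (∏ x ∈ s, if p x then (-1 : ℤˣ) else 1) = (-1) ^ (s.filter p).card := by
  rw [← Finset.prod_filter_mul_prod_filter_not s p]
  rw [Finset.prod_congr rfl (fun x hx => if_pos (Finset.mem_filter.mp hx).2),
    Finset.prod_congr rfl (fun x hx => if_neg (Finset.mem_filter.mp hx).2)]
  simp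

lemma sgn_strictMono_comp {m : ℕ} (g : Fin m → ℕ) (hg : StrictMono g)
    (π : Equiv.Perm (Fin m)) : sgn (g ∘ π) = (Equiv.Perm.sign π : ℤ) := by
  rw [← signAux_eq_sign]
  unfold sgn Equiv.Perm.signAux
  rw [prod_ite_neg_one]
  have hcard : ((Equiv.Perm.finPairsLT m).filter fun x => π x.1 ≤ π x.2).card
      = ((univ : Finset (Fin m × Fin m)).filter
          fun p => p.1 < p.2 ∧ (g ∘ π) p.2 < (g ∘ π) p.1).card := by
    apply Finset.card_bij (fun x _ => (x.2, x.1))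
    · rintro ⟨x1, x2⟩ hx
      simp only [Finset.mem_filter, Equiv.Perm.mem_finPairsLT] at hx ⊢
      refine ⟨Finset.mem_univ _, hx.1, ?_⟩
      simp only [Function.comp_apply]
      exact hg (lt_of_le_of_ne hx.2 fun h => hx.1.ne' (π.injective h))
    · rintro ⟨x1, x2⟩ hx ⟨y1, y2⟩ hy h
      simp only [Prod.mk.injEq] at h
      exact Sigma.ext h.2 (heq_of_eq h.1)
    · rintro ⟨p1, p2⟩ hp
      simp only [Finset.mem_filter, Finset.mem_univ, true_and, Function.comp_apply] at hp
      exact ⟨⟨p2, p1⟩, Finset.mem_filter.mpr ⟨Equiv.Perm.mem_finPairsLT.mpr hp.1,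
        le_of_lt (hg.lt_iff_lt.mp hp.2)⟩, rfl⟩
  rw [hcard]
  push_cast
  simp

lemma sgn_comp_swap {m : ℕ} (f : Fin m → ℕ) (hf : Function.Injective f) {a b : Fin m}
    (hab : a ≠ b) : sgn (f ∘ Equiv.swap a b) = - sgn f := by
  set τ := Tuple.sort f with hτ
  have hg : StrictMono (f ∘ τ) :=
    (Tuple.monotone_sort f).strictMono_of_injective (hf.comp τ.injective)
  have h1 : f = (f ∘ τ) ∘ ⇑τ⁻¹ := by
    funext i; simp [Function.comp]
  have h2 : f ∘ ⇑(Equiv.swap a b) = (f ∘ τ) ∘ ⇑(τ⁻¹ * Equiv.swap a b) := by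
    funext i; simp [Function.comp, Equiv.Perm.mul_apply]
  rw [h2, sgn_strictMono_comp _ hg, h1, sgn_strictMono_comp _ hg]
  rw [map_mul, Equiv.Perm.sign_swap hab]
  push_cast
  ring

/-- A row of length `n` is compatible with `γ` if, for every (0-indexed) position
`u ≥ 1`, the part `lam u` exceeds the number of `1`s among `γ_1,…,γ_u`. -/
def RowCompat (γ : ℕ → Bool) {n : ℕ} (lam : Fin n → ℕ) : Prop :=
  ∀ u : Fin n, 1 ≤ u.1 →
    ((Finset.Icc 1 u.1).filter fun l => γ l = true).card < lam u

/-- A triangular tableau is compatible with `γ` if all its rows are. -/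
def Compat {m : ℕ} (γ : ℕ → Bool) (T : Tab m) : Prop := ∀ i, RowCompat γ (T i)

/-- Exchange the initial segments of length `c` (0-indexed columns `< c`) of row
`c - 1` (0-indexed, i.e. paper's row `ℓ = c`) and row `r`; all other rows are kept. -/
def swapRows (m : ℕ) (c : ℕ) (r : Fin m) (T : Tab m) : Tab m := fun i u =>
  if i.1 = c - 1 then
    (if h : u.1 ≤ r.1 then T r ⟨u.1, Nat.lt_succ_of_le h⟩ else T i u)
  else if i = r then
    (if h2 : u.1 < c then
      (if hc : c - 1 < m then T ⟨c - 1, hc⟩ ⟨u.1, (by omega : u.1 < c - 1 + 1)⟩ else T i u)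
     else T i u)
  else T i u

/-- The map `ι` is a well-defined fixed-point-free involution on the set of
non-intersecting triangular tableaux compatible with `γ'` but not with `γ`, and it
reverses the sign of the attached permutation.  Here `c` (0-indexed) is the minimal
bad column (paper's `j_min`, with `ℓ = j_min - 1 = c` in paper indexing), `r` is the
row whose entry in that column equals `k` (the number of `1`s in `γ`), and
`ι T = swapRows m c r T`. -/
theorem statement14 (m : ℕ) (γ : ℕ → Bool)
    (hsupp : ∀ p, γ p = true → 1 ≤ p ∧ p ≤ m - 1)
    (ik : ℕ) (hik : γ ik = true) (hmax : ∀ p, γ p = true → p ≤ ik)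
    (k : ℕ) (hk : k = ((Finset.Icc 1 ik).filter fun l => γ l = true).card)
    (T : Tab m) (hTtab : T ∈ tabFinset m) (hNI : NonInt T)
    (hC' : Compat (fun p => if p = ik then false else γ p) T) (hC : ¬ Compat γ T)
    (c : ℕ) (hcik : ik ≤ c)
    (hcmin : ∀ c', ik ≤ c' →
      (∃ i : Fin m, ∃ h : c' ≤ i.1, T i ⟨c', Nat.lt_succ_of_le h⟩ = k) → c ≤ c')
    (r : Fin m) (hr : c ≤ r.1) (hrk : T r ⟨c, Nat.lt_succ_of_le hr⟩ = k) :
    swapRows m c r T ∈ tabFinset m ∧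
    NonInt (swapRows m c r T) ∧
    Compat (fun p => if p = ik then false else γ p) (swapRows m c r T) ∧
    ¬ Compat γ (swapRows m c r T) ∧
    swapRows m c r (swapRows m c r T) = T ∧
    swapRows m c r T ≠ T ∧
    sgn (firsts (swapRows m c r T)) = - sgn (firsts T) := by
  classical
  -- basic numeric facts
  have hik1 : 1 ≤ ik := (hsupp ik hik).1
  have hrm : r.1 < m := r.2
  have hc1 : 1 ≤ c := hik1.trans hcik
  have hc1m : c - 1 < m := by omega
  have hrc : r.1 ≠ c - 1 := by omega
  have hk1 : 1 ≤ k := by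
    rw [hk]
    exact Finset.card_pos.mpr ⟨ik, Finset.mem_filter.mpr
      ⟨Finset.mem_Icc.mpr ⟨hik1, le_refl _⟩, hik⟩⟩
  -- counting lemmas
  have hcntγ : ∀ u, ik ≤ u → ((Finset.Icc 1 u).filter fun l => γ l = true).card = k := by
    intro u hu
    rw [hk]
    congr 1
    ext l
    simp only [Finset.mem_filter, Finset.mem_Icc]
    constructor
    · rintro ⟨⟨h1, h2⟩, h3⟩; exact ⟨⟨h1, hmax l h3⟩, h3⟩
    · rintro ⟨⟨h1, h2⟩, h3⟩; exact ⟨⟨h1, h2.trans hu⟩, h3⟩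
  have hcntγ' : ∀ u, ik - 1 ≤ u →
      ((Finset.Icc 1 u).filter fun l => (if l = ik then false else γ l) = true).card = k - 1 := by
    intro u hu
    have hset : ((Finset.Icc 1 u).filter fun l => (if l = ik then false else γ l) = true)
        = ((Finset.Icc 1 ik).filter fun l => γ l = true).erase ik := by
      ext l
      simp only [Finset.mem_filter, Finset.mem_Icc, Finset.mem_erase]
      constructor
      · rintro ⟨⟨h1, h2⟩, h3⟩
        by_cases hl : l = ik
        · simp [hl] at h3
        · simp only [hl, if_false] at h3
          exact ⟨hl, ⟨⟨h1, hmax l h3⟩, h3⟩⟩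
      · rintro ⟨hl, ⟨h1, h2⟩, h3⟩
        have hlu : l ≤ u := by omega
        refine ⟨⟨h1, hlu⟩, ?_⟩
        simp [hl, h3]
    rw [hset, Finset.card_erase_of_mem, ← hk]
    exact Finset.mem_filter.mpr ⟨Finset.mem_Icc.mpr ⟨hik1, le_refl _⟩, hik⟩
  -- row facts
  have hrowmem : ∀ i, T i ∈ rowFinset m i := fun i => Fintype.mem_piFinset.mp hTtab i
  have hdec : ∀ (i : Fin m) (u v : Fin (i.1 + 1)), u ≤ v → T i v ≤ T i u :=
    fun i => (Finset.mem_filter.mp (hrowmem i)).2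
  have hrange : ∀ (i : Fin m) (u : Fin (i.1 + 1)), T i u ∈ Finset.Icc 1 m :=
    fun i u => Fintype.mem_piFinset.mp (Finset.mem_filter.mp (hrowmem i)).1 u
  have hge : ∀ (i : Fin m) (u : Fin (i.1 + 1)), ik - 1 ≤ u.1 → k ≤ T i u := by
    intro i u hu
    by_cases h1 : 1 ≤ u.1
    · have h2 := hC' i u h1
      rw [hcntγ' u.1 (by omega)] at h2
      omega
    · have hik' : ik = 1 := by omega
      have hkk : k ≤ 1 := by
        rw [hk, hik']
        have hsub : (Finset.Icc 1 1).filter (fun l => γ l = true) ⊆ {1} := by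
          intro l hl
          simp only [Finset.mem_filter, Finset.mem_Icc, Finset.mem_singleton] at hl ⊢
          omega
        calc ((Finset.Icc 1 1).filter (fun l => γ l = true)).card
            ≤ ({1} : Finset ℕ).card := Finset.card_le_card hsub
          _ = 1 := Finset.card_singleton 1
      have := (Finset.mem_Icc.mp (hrange i u)).1
      omega
  have hTrk : ∀ u : Fin (r.1 + 1), c ≤ u.1 → T r u = k := by
    intro u hu
    have h1 : T r u ≤ T r ⟨c, Nat.lt_succ_of_le hr⟩ :=
      hdec r ⟨c, Nat.lt_succ_of_le hr⟩ u (by exact hu)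
    rw [hrk] at h1
    have h2 : k ≤ T r u := hge r u (by omega)
    omega
  have hKrow : ∀ u : Fin (c - 1 + 1), k ≤ T ⟨c - 1, hc1m⟩ u := by
    intro u
    have hKlast : k ≤ T ⟨c - 1, hc1m⟩ ⟨c - 1, Nat.lt_succ_self _⟩ :=
      hge _ ⟨c - 1, Nat.lt_succ_self _⟩ (show ik - 1 ≤ c - 1 by omega)
    refine le_trans hKlast (hdec ⟨c - 1, hc1m⟩ u ⟨c - 1, Nat.lt_succ_self _⟩ ?_)
    exact Nat.lt_succ_iff.mp u.isLt
  -- description of the entries of the swapped tableau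
  have hS1g : ∀ (T' : Tab m) (i : Fin m) (u : Fin (i.1 + 1)) (hi : i.1 = c - 1),
      swapRows m c r T' i u = T' r ⟨u.1, by have := u.isLt; omega⟩ := by
    intro T' i u hi
    have hu : u.1 ≤ r.1 := by have := u.isLt; omega
    simp only [swapRows, if_pos hi, dif_pos hu]
  have hS2g : ∀ (T' : Tab m) (u : Fin (r.1 + 1)) (hu : u.1 < c),
      swapRows m c r T' r u = T' ⟨c - 1, hc1m⟩ ⟨u.1, show u.1 < c - 1 + 1 by omega⟩ := by
    intro T' u hu
    simp only [swapRows, if_neg hrc, dif_pos hu, dif_pos hc1m]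
    rw [if_pos trivial]
  have hS3g : ∀ (T' : Tab m) (u : Fin (r.1 + 1)), c ≤ u.1 →
      swapRows m c r T' r u = T' r u := by
    intro T' u hu
    simp only [swapRows, if_neg hrc, dif_neg (not_lt.mpr hu)]
    rw [if_pos trivial]
  have hS4g : ∀ (T' : Tab m) (i : Fin m) (u : Fin (i.1 + 1)), i.1 ≠ c - 1 → i ≠ r →
      swapRows m c r T' i u = T' i u := by
    intro T' i u hi hir
    simp only [swapRows, if_neg hi, if_neg hir]
  refine ⟨?_, ?_, ?_, ?_, ?_, ?_, ?_⟩
  · -- membership in tabFinset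
    refine Fintype.mem_piFinset.mpr fun i => Finset.mem_filter.mpr ⟨?_, ?_⟩
    · refine Fintype.mem_piFinset.mpr fun u => ?_
      by_cases hi : i.1 = c - 1
      · rw [hS1g T i u hi]; exact hrange _ _
      · by_cases hir : i = r
        · have hir2 : r = i := hir.symm
          subst hir2
          by_cases hu : u.1 < c
          · rw [hS2g T u hu]; exact hrange _ _
          · rw [hS3g T u (not_lt.mp hu)]; exact hrange _ _
        · rw [hS4g T i u hi hir]; exact hrange _ _
    · intro u v huv
      by_cases hi : i.1 = c - 1
      · rw [hS1g T i u hi, hS1g T i v hi]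
        exact hdec r _ _ (by exact huv)
      · by_cases hir : i = r
        · have hir2 : r = i := hir.symm
          subst hir2
          by_cases hv : v.1 < c
          · have hu : u.1 < c := lt_of_le_of_lt (by exact huv) hv
            rw [hS2g T u hu, hS2g T v hv]
            exact hdec _ _ _ (by exact huv)
          · rw [hS3g T v (not_lt.mp hv), hTrk v (not_lt.mp hv)]
            by_cases hu : u.1 < c
            · rw [hS2g T u hu]; exact hKrow _
            · rw [hS3g T u (not_lt.mp hu)]
              have := hTrk u (not_lt.mp hu); omega
        · rw [hS4g T i u hi hir, hS4g T i v hi hir]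
          exact hdec i u v huv
  · -- NonInt
    have key : ∀ (i : Fin m) (j : ℕ) (h : j ≤ i.1), ∃ w : Fin m, ∃ hw : j ≤ w.1,
        swapRows m c r T i ⟨j, Nat.lt_succ_of_le h⟩ = T w ⟨j, Nat.lt_succ_of_le hw⟩ ∧
        ((i.1 = c - 1 ∧ w = r) ∨ (i = r ∧ j < c ∧ w.1 = c - 1) ∨
          (i.1 ≠ c - 1 ∧ ¬(i = r ∧ j < c) ∧ w = i)) := by
      intro i j h
      by_cases hi : i.1 = c - 1
      · exact ⟨r, by omega, by rw [hS1g T i _ hi], Or.inl ⟨hi, rfl⟩⟩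
      · by_cases hir : i = r
        · have hir2 : r = i := hir.symm
          subst hir2
          by_cases hjc : j < c
          · exact ⟨⟨c - 1, hc1m⟩, show j ≤ c - 1 by omega,
              by rw [hS2g T _ hjc], Or.inr (Or.inl ⟨rfl, hjc, rfl⟩)⟩
          · exact ⟨r, h, by rw [hS3g T _ (not_lt.mp hjc)],
              Or.inr (Or.inr ⟨hi, by simp [hjc], rfl⟩)⟩
        · exact ⟨i, h, by rw [hS4g T i _ hi hir],
            Or.inr (Or.inr ⟨hi, by simp [hir], rfl⟩)⟩
    intro i i' j h h' heq
    obtain ⟨w, hw, he1, hd1⟩ := key i j h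
    obtain ⟨w', hw', he2, hd2⟩ := key i' j h'
    rw [he1, he2] at heq
    have hww : w = w' := hNI w w' j hw hw' heq
    rcases hd1 with ⟨h1, h2⟩ | ⟨h1, h2, h3⟩ | ⟨h1, h2, h3⟩ <;>
      rcases hd2 with ⟨g1, g2⟩ | ⟨g1, g2, g3⟩ | ⟨g1, g2, g3⟩
    · exact Fin.ext (h1.trans g1.symm)
    · exfalso
      have : r.1 = c - 1 := by rw [← g3, ← hww, h2]
      omega
    · exfalso
      exact g2 ⟨g3.symm.trans (hww.symm.trans h2), by omega⟩
    · exfalso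
      have : r.1 = c - 1 := by rw [← h3, hww, g2]
      omega
    · exact h1.trans g1.symm
    · exfalso
      have : i'.1 = c - 1 := by rw [← g3, ← hww, h3]
      exact g1 this
    · exfalso
      exact h2 ⟨h3.symm.trans (hww.trans g2), by omega⟩
    · exfalso
      have : i.1 = c - 1 := by rw [← h3, hww, g3]
      exact h1 this
    · exact h3.symm.trans (hww.trans g3)
  · -- Compat γ'
    intro i u h1u
    by_cases hi : i.1 = c - 1
    · rw [hS1g T i u hi]
      exact hC' r ⟨u.1, by have := u.isLt; omega⟩ h1u
    · by_cases hir : i = r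
      · have hir2 : r = i := hir.symm
        subst hir2
        by_cases hu : u.1 < c
        · rw [hS2g T u hu]
          exact hC' ⟨c - 1, hc1m⟩ ⟨u.1, show u.1 < c - 1 + 1 by omega⟩ h1u
        · rw [hS3g T u (not_lt.mp hu)]
          exact hC' r u h1u
      · rw [hS4g T i u hi hir]
        exact hC' i u h1u
  · -- ¬ Compat γ
    intro hcon
    have h0 := hcon r ⟨c, Nat.lt_succ_of_le hr⟩ hc1
    rw [hS3g T ⟨c, Nat.lt_succ_of_le hr⟩ (le_refl c), hrk, hcntγ c hcik] at h0
    exact lt_irrefl _ h0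
  · -- involution
    funext i u
    by_cases hi : i.1 = c - 1
    · obtain rfl : i = ⟨c - 1, hc1m⟩ := Fin.ext hi
      rw [hS1g (swapRows m c r T) _ u rfl, hS2g T]
      exact show u.1 < c by have := u.isLt; omega
    · by_cases hir : i = r
      · have hir2 : r = i := hir.symm
        subst hir2
        by_cases hu : u.1 < c
        · rw [hS2g (swapRows m c r T) u hu, hS1g T ⟨c - 1, hc1m⟩ _ rfl]
        · rw [hS3g (swapRows m c r T) u (not_lt.mp hu), hS3g T u (not_lt.mp hu)]
      · rw [hS4g (swapRows m c r T) i u hi hir, hS4g T i u hi hir]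
  · -- not a fixed point
    intro he
    have h0 := hS1g T ⟨c - 1, hc1m⟩ ⟨c - 1, Nat.lt_succ_self _⟩ rfl
    rw [he] at h0
    have h1 : (⟨c - 1, hc1m⟩ : Fin m) = r :=
      hNI ⟨c - 1, hc1m⟩ r (c - 1) (le_refl _) (by omega) h0
    exact hrc (congrArg Fin.val h1).symm
  · -- sign
    have hab : (⟨c - 1, hc1m⟩ : Fin m) ≠ r := fun h => hrc (congrArg Fin.val h).symm
    have hfi : Function.Injective (firsts T) :=
      fun i i' h => hNI i i' 0 (Nat.zero_le _) (Nat.zero_le _) h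
    have heq : firsts (swapRows m c r T) = firsts T ∘ ⇑(Equiv.swap ⟨c - 1, hc1m⟩ r) := by
      funext i
      simp only [Function.comp_apply]
      by_cases hi : i.1 = c - 1
      · obtain rfl : i = ⟨c - 1, hc1m⟩ := Fin.ext hi
        rw [Equiv.swap_apply_left]
        exact hS1g T _ _ rfl
      · by_cases hir : i = r
        · have hir2 : r = i := hir.symm
          subst hir2
          rw [Equiv.swap_apply_right]
          exact hS2g T ⟨0, Nat.succ_pos _⟩ hc1
        · rw [Equiv.swap_apply_of_ne_of_ne (fun h => hi (congrArg Fin.val h)) hir]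
          exact hS4g T i _ hi hir
    rw [heq, sgn_comp_swap (firsts T) hfi hab]


end
end
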